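/- arXiv:1603.00903 — 2 statements merged into one kernel-verified Lean document; each statement's English description precedes it below -/
import Mathlib

section
/- Let a : ℝ with 0 ≤ a ≤ 1, and define ρ₁ := ((a : ℂ)/2) • (|0^q⟩⟨0^q| + |1^q⟩⟨1^q|) + (((1 - a : ℝ) : ℂ)/2) • (|2^q⟩⟨2^q| + |3^q⟩⟨3^q|). Then trace(Π_q * ρ₁) = 1/2. (This is the first case of the mixed-answer lemma: a reduced GHZ-like state on the wrong qudits projects onto the correct codespace with probability exactly one half.) -/
open Matrix

/-- Standard basis vector of the `q`-qudit space supported at the constant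
function `fun _ => u`. -/
def basisVec (q : ℕ) (u : Fin 4) : (Fin q → Fin 4) → ℂ :=
  fun x => if x = (fun _ => u) then 1 else 0

/-- The codespace projector `Π_q`. -/
noncomputable def codeProj (q : ℕ) : Matrix (Fin q → Fin 4) (Fin q → Fin 4) ℂ :=
  (1/2 : ℂ) •
    ((∑ u ∈ ({0,1} : Finset (Fin 4)), ∑ v ∈ ({0,1} : Finset (Fin 4)),
        vecMulVec (basisVec q u) (star (basisVec q v)))
      + (∑ w ∈ ({2,3} : Finset (Fin 4)), ∑ z ∈ ({2,3} : Finset (Fin 4)),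
        vecMulVec (basisVec q w) (star (basisVec q z))))

lemma star_basisVec (q : ℕ) (u : Fin 4) : star (basisVec q u) = basisVec q u := by
  funext x
  simp [basisVec]

lemma vecMulVec_mul_vecMulVec {n : Type*} [Fintype n] (x y u v : n → ℂ) :
    vecMulVec x y * vecMulVec u v = (y ⬝ᵥ u) • vecMulVec x v := by
  ext i j
  simp [Matrix.mul_apply, vecMulVec_apply, dotProduct, Finset.mul_sum, Finset.sum_mul]
  congr 1; funext k; ring

lemma trace_vecMulVec' {n : Type*} [Fintype n] (x y : n → ℂ) :
    (vecMulVec x y).trace = x ⬝ᵥ y := by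
  simp [Matrix.trace, vecMulVec_apply, dotProduct, Matrix.diag]

lemma basis_dot (q : ℕ) (hq : 1 ≤ q) (u v : Fin 4) :
    basisVec q u ⬝ᵥ basisVec q v = if u = v then 1 else 0 := by
  simp only [dotProduct, basisVec]
  rw [Finset.sum_eq_single (fun _ => u)]
  · simp only [if_pos rfl]
    have : ((fun _ => u) : Fin q → Fin 4) = (fun _ => v) ↔ u = v := by
      constructor
      · intro h
        have := congrFun h ⟨0, hq⟩
        exact this
      · intro h; subst h; rfl
    simp [this]
  · intro b _ hb
    rw [if_neg hb]; ring
  · simp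

theorem trace_codeProj_mixedGHZ (q : ℕ) (hq : 1 ≤ q) (a : ℝ) (ha₀ : 0 ≤ a) (ha₁ : a ≤ 1) :
    (codeProj q *
      (((a : ℂ)/2) • (vecMulVec (basisVec q 0) (star (basisVec q 0))
          + vecMulVec (basisVec q 1) (star (basisVec q 1)))
        + (((1 - a : ℝ) : ℂ)/2) • (vecMulVec (basisVec q 2) (star (basisVec q 2))
          + vecMulVec (basisVec q 3) (star (basisVec q 3))))).trace = 1/2 := by
  simp only [codeProj, star_basisVec]
  simp only [Finset.sum_insert (by decide : (0:Fin 4) ∉ ({1} : Finset (Fin 4))),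
    Finset.sum_insert (by decide : (2:Fin 4) ∉ ({3} : Finset (Fin 4))),
    Finset.sum_singleton]
  simp only [smul_add, add_mul, mul_add, Matrix.smul_mul, Matrix.mul_smul,
    _root_.vecMulVec_mul_vecMulVec, basis_dot q hq, trace_add, trace_smul, trace_vecMulVec',
    smul_eq_mul]
  norm_num
  push_cast
  ring
end

section
/- Let b : ℝ, and suppose that for every choice function f : Fin m → Fin l and every unit vector φ, the energy of φ with respect to Σ_{i : Fin m} H i (f i) is at least b * m. Then for every choice function f and every unit vector ψ: (1/m) * Σ_{i : Fin m} (1/2 + (1/2) * (1 - Re(star ψ ⬝ᵥ (H i (f i)).mulVec ψ))) ≤ 1 - b/2. (Soundness of the CRESP game against honest quantum strategies: if every selected Hamiltonian has groundstate energy at least b·m, then provers answering honestly are accepted with probability at most 1 - b/2.) -/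
open Matrix
open scoped ComplexOrder

/-- A Hamiltonian term on `n` qubits: Hermitian and `0 ≤ H ≤ 1` in the
Loewner order. -/
def IsHamiltonianTerm {n : ℕ} (H : Matrix (Fin n → Fin 2) (Fin n → Fin 2) ℂ) : Prop :=
  H.IsHermitian ∧ H.PosSemidef ∧ (1 - H).PosSemidef

theorem cresp_soundness_honest (n m l : ℕ) (hm : 1 ≤ m) (hl : 1 ≤ l)
    (H : Fin m → Fin l → Matrix (Fin n → Fin 2) (Fin n → Fin 2) ℂ)
    (hH : ∀ i j, IsHamiltonianTerm (H i j))
    (b : ℝ)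
    (hlow : ∀ (f : Fin m → Fin l) (φ : (Fin n → Fin 2) → ℂ), star φ ⬝ᵥ φ = 1 →
      (star φ ⬝ᵥ (∑ i : Fin m, H i (f i)).mulVec φ).re ≥ b * m) :
    ∀ (f : Fin m → Fin l) (ψ : (Fin n → Fin 2) → ℂ), star ψ ⬝ᵥ ψ = 1 →
      (1/(m : ℝ)) * ∑ i : Fin m,
          (1/2 + (1/2) * (1 - (star ψ ⬝ᵥ (H i (f i)).mulVec ψ).re))
        ≤ 1 - b/2 := by
  intro f ψ hψ
  have hsum : (star ψ ⬝ᵥ (∑ i : Fin m, H i (f i)).mulVec ψ).re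
      = ∑ i : Fin m, (star ψ ⬝ᵥ (H i (f i)).mulVec ψ).re := by
    have key : ∀ s : Finset (Fin m), (star ψ ⬝ᵥ (∑ i ∈ s, H i (f i)).mulVec ψ).re
        = ∑ i ∈ s, (star ψ ⬝ᵥ (H i (f i)).mulVec ψ).re := by
      intro s
      induction s using Finset.induction with
      | empty => simp
      | insert a s h ih => simp [Finset.sum_insert h, Matrix.add_mulVec, dotProduct_add, ih]
    exact key Finset.univ
  have hE : b * m ≤ ∑ i : Fin m, (star ψ ⬝ᵥ (H i (f i)).mulVec ψ).re := by
    rw [← hsum]; exact hlow f ψ hψ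
  have hmpos : (0:ℝ) < m := by exact_mod_cast hm
  have hLHS : (1/(m : ℝ)) * ∑ i : Fin m,
      (1/2 + (1/2) * (1 - (star ψ ⬝ᵥ (H i (f i)).mulVec ψ).re))
      = 1 - (∑ i : Fin m, (star ψ ⬝ᵥ (H i (f i)).mulVec ψ).re) / (2 * m) := by
    rw [Finset.sum_add_distrib, Finset.sum_const, ← Finset.mul_sum]
    field_simp
    simp only [Finset.sum_sub_distrib, Finset.sum_const, Finset.card_univ, Fintype.card_fin, nsmul_eq_mul, mul_one]
    ring
  rw [hLHS]
  have : b / 2 ≤ (∑ i : Fin m, (star ψ ⬝ᵥ (H i (f i)).mulVec ψ).re) / (2 * m) := by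
    rw [div_le_div_iff₀ (by norm_num) (by positivity)]
    nlinarith
  linarith
end
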